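/- For positive integers m and n, the integer (2m+2)! · ∑_{h=0}^{n-1} h^{2m+1} is divisible by n^2. -/

import Mathlib

open Polynomial Finset

/-- The q-integer `[n]_q = 1 + q + ⋯ + q^{n-1}` as a polynomial in `ℤ[q]`. -/
noncomputable def qint (n : ℕ) : Polynomial ℤ := ∑ i ∈ Finset.range n, X ^ i

/-- The q-factorial `[n]_q! = [n]_q [n-1]_q ⋯ [1]_q`. -/
noncomputable def qfact : ℕ → Polynomial ℤ
  | 0 => 1
  | n + 1 => qint (n + 1) * qfact n

/-- The Gaussian (q-)binomial coefficient `[n choose k]_q` as a polynomial in `ℤ[q]`,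
defined by the q-Pascal recurrence; it equals `∏_{i=1}^k (1-q^{n-i+1})/(1-q^i)` for
`0 ≤ k ≤ n` and `0` otherwise. -/
noncomputable def qbinom : ℕ → ℕ → Polynomial ℤ
  | _, 0 => 1
  | 0, _ + 1 => 0
  | n + 1, k + 1 => qbinom n k + X ^ (k + 1) * qbinom n (k + 1)


private lemma pow_sum_identity (k n : ℕ) :
    (n : ℤ) ^ (k + 1) = ∑ j ∈ Finset.range (k + 1),
      ((k + 1).choose j : ℤ) * ∑ h ∈ Finset.range n, (h : ℤ) ^ j := by
  have tel := Finset.sum_range_sub (fun h : ℕ => (h : ℤ) ^ (k + 1)) n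
  have per : ∀ h : ℕ, ((h + 1 : ℕ) : ℤ) ^ (k + 1) - (h : ℤ) ^ (k + 1)
      = ∑ j ∈ Finset.range (k + 1), ((k + 1).choose j : ℤ) * (h : ℤ) ^ j := by
    intro h
    have hp := add_pow (h : ℤ) 1 (k + 1)
    simp only [one_pow, mul_one] at hp
    rw [Finset.sum_range_succ, Nat.choose_self, Nat.cast_one, mul_one] at hp
    push_cast
    rw [hp, add_sub_cancel_right]
    exact Finset.sum_congr rfl fun j _ => mul_comm _ _
  calc (n : ℤ) ^ (k + 1) = (n : ℤ) ^ (k+1) - (0:ℕ) ^ (k+1) := by simp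
    _ = ∑ h ∈ Finset.range n, (((h + 1 : ℕ) : ℤ) ^ (k + 1) - (h : ℤ) ^ (k + 1)) := by
        rw [tel]
    _ = ∑ h ∈ Finset.range n, ∑ j ∈ Finset.range (k + 1),
          ((k + 1).choose j : ℤ) * (h : ℤ) ^ j := by
        exact Finset.sum_congr rfl fun h _ => per h
    _ = ∑ j ∈ Finset.range (k + 1), ((k + 1).choose j : ℤ) * ∑ h ∈ Finset.range n, (h : ℤ) ^ j := by
        rw [Finset.sum_comm]
        exact Finset.sum_congr rfl fun j _ => by rw [Finset.mul_sum]

private lemma dvd_fact_pow_sum (k : ℕ) : ∀ n : ℕ,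
    (n : ℤ) ∣ ((k + 1).factorial : ℤ) * ∑ h ∈ Finset.range n, (h : ℤ) ^ k := by
  induction k using Nat.strong_induction_on with
  | _ k ih =>
    intro n
    have key := pow_sum_identity k n
    rw [Finset.sum_range_succ, Nat.choose_succ_self_right] at key
    -- key : n^(k+1) = (∑ j<k, choose(k+1,j) * S j) + S k
    have hk : ((k + 1).factorial : ℤ) * ∑ h ∈ Finset.range n, (h : ℤ) ^ k
        = (k.factorial : ℤ) * (n : ℤ) ^ (k + 1)
          - ∑ j ∈ Finset.range k, (k.factorial : ℤ) * ((k + 1).choose j : ℤ)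
              * ∑ h ∈ Finset.range n, (h : ℤ) ^ j := by
      have hms : ∑ j ∈ Finset.range k, (k.factorial : ℤ) * ((k + 1).choose j : ℤ)
              * ∑ h ∈ Finset.range n, (h : ℤ) ^ j
          = (k.factorial : ℤ) * ∑ j ∈ Finset.range k, ((k + 1).choose j : ℤ)
              * ∑ h ∈ Finset.range n, (h : ℤ) ^ j := by
        rw [Finset.mul_sum]
        exact Finset.sum_congr rfl fun j _ => by ring
      have hfac : ((k + 1).factorial : ℤ) = ((k : ℤ) + 1) * (k.factorial : ℤ) := by
        push_cast [Nat.factorial_succ]; ring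
      rw [hms, hfac]
      push_cast at key ⊢
      linear_combination (-(k.factorial : ℤ)) * key
    rw [hk]
    apply dvd_sub
    · exact Dvd.dvd.mul_left (dvd_pow_self (n : ℤ) (Nat.succ_ne_zero k)) _
    · apply Finset.dvd_sum
      intro j hj
      have hj' : j < k := Finset.mem_range.mp hj
      have h1 : (n : ℤ) ∣ ((j + 1).factorial : ℤ) * ∑ h ∈ Finset.range n, (h : ℤ) ^ j :=
        ih j hj' n
      have h2 : ((j + 1).factorial : ℤ) ∣ (k.factorial : ℤ) := by
        exact_mod_cast Nat.factorial_dvd_factorial (by omega)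
      obtain ⟨c, hc⟩ := h2
      rw [hc]
      calc (n : ℤ) ∣ ((j + 1).factorial : ℤ) * ∑ h ∈ Finset.range n, (h : ℤ) ^ j := h1
        _ ∣ ((j + 1).factorial : ℤ) * c * ((k + 1).choose j : ℤ)
              * ∑ h ∈ Finset.range n, (h : ℤ) ^ j := ⟨c * ((k + 1).choose j : ℤ), by ring⟩

private lemma sq_dvd_aux (x c : ℤ) : ∀ k : ℕ,
    x ^ 2 ∣ (c + x) ^ (k + 1) - c ^ (k + 1) - ((k : ℤ) + 1) * x * c ^ k := by
  intro k
  induction k with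
  | zero => simp
  | succ k ih =>
    obtain ⟨d, hd⟩ := ih
    refine ⟨(c + x) * d + ((k : ℤ) + 1) * c ^ k, ?_⟩
    push_cast
    linear_combination (c + x) * hd

private lemma key2 (m n : ℕ) (hm : 1 ≤ m) :
    (n : ℤ) ^ 2 ∣ 2 * (∑ h ∈ Finset.range n, (h : ℤ) ^ (2 * m + 1))
      - (2 * (m : ℤ) + 1) * n * ∑ h ∈ Finset.range n, (h : ℤ) ^ (2 * m) := by
  have hrefl := Finset.sum_range_reflect (fun h : ℕ => (h : ℤ) ^ (2 * m + 1)) n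
  have hterm : ∀ h ∈ Finset.range n, (n : ℤ) ^ 2 ∣
      ((n - 1 - h : ℕ) : ℤ) ^ (2 * m + 1) + ((h : ℤ) + 1) ^ (2 * m + 1)
        - (2 * (m : ℤ) + 1) * n * ((h : ℤ) + 1) ^ (2 * m) := by
    intro h hh
    have hlt := Finset.mem_range.mp hh
    have hc : ((n - 1 - h : ℕ) : ℤ) = (-((h : ℤ) + 1)) + n := by
      have h1 : n - 1 - h = n - (h + 1) := by omega
      rw [h1, Nat.cast_sub (by omega)]
      push_cast; ring
    have hdvd := sq_dvd_aux (n : ℤ) (-((h : ℤ) + 1)) (2 * m)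
    have ho : (-((h : ℤ) + 1)) ^ (2 * m + 1) = -(((h : ℤ) + 1) ^ (2 * m + 1)) :=
      Odd.neg_pow ⟨m, by ring⟩ _
    have he : (-((h : ℤ) + 1)) ^ (2 * m) = ((h : ℤ) + 1) ^ (2 * m) :=
      Even.neg_pow ⟨m, by ring⟩ _
    rw [ho, he] at hdvd
    push_cast at hdvd
    rw [hc]
    obtain ⟨d, hd⟩ := hdvd
    exact ⟨d, by linear_combination hd⟩
  have hsum := Finset.dvd_sum hterm
  have shift1 : ∑ h ∈ Finset.range n, ((h : ℤ) + 1) ^ (2 * m + 1)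
      = (∑ h ∈ Finset.range n, (h : ℤ) ^ (2 * m + 1)) + (n : ℤ) ^ (2 * m + 1) := by
    have h1 := Finset.sum_range_succ' (fun i : ℕ => (i : ℤ) ^ (2 * m + 1)) n
    have h2 := Finset.sum_range_succ (fun i : ℕ => (i : ℤ) ^ (2 * m + 1)) n
    push_cast at h1 h2
    simp only [zero_pow (by omega : 2 * m + 1 ≠ 0)] at h1
    linarith
  have shift2 : ∑ h ∈ Finset.range n, ((h : ℤ) + 1) ^ (2 * m)
      = (∑ h ∈ Finset.range n, (h : ℤ) ^ (2 * m)) + (n : ℤ) ^ (2 * m) := by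
    have h1 := Finset.sum_range_succ' (fun i : ℕ => (i : ℤ) ^ (2 * m)) n
    have h2 := Finset.sum_range_succ (fun i : ℕ => (i : ℤ) ^ (2 * m)) n
    push_cast at h1 h2
    simp only [zero_pow (by omega : 2 * m ≠ 0)] at h1
    linarith
  have split : ∑ h ∈ Finset.range n,
      (((n - 1 - h : ℕ) : ℤ) ^ (2 * m + 1) + ((h : ℤ) + 1) ^ (2 * m + 1)
        - (2 * (m : ℤ) + 1) * n * ((h : ℤ) + 1) ^ (2 * m))
      = (∑ h ∈ Finset.range n, (h : ℤ) ^ (2 * m + 1))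
        + ((∑ h ∈ Finset.range n, (h : ℤ) ^ (2 * m + 1)) + (n : ℤ) ^ (2 * m + 1))
        - (2 * (m : ℤ) + 1) * n
            * ((∑ h ∈ Finset.range n, (h : ℤ) ^ (2 * m)) + (n : ℤ) ^ (2 * m)) := by
    rw [Finset.sum_sub_distrib, Finset.sum_add_distrib, hrefl, shift1, ← Finset.mul_sum, shift2]
  rw [split] at hsum
  obtain ⟨d, hd⟩ := hsum
  have hps : (n : ℤ) ^ (2 * m + 1) = (n : ℤ) ^ 2 * (n : ℤ) ^ (2 * m - 1) := by
    rw [← pow_add]; congr 1; omega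
  refine ⟨d + 2 * m * (n : ℤ) ^ (2 * m - 1), ?_⟩
  have hps2 : (n : ℤ) * (n : ℤ) ^ (2 * m) = (n : ℤ) ^ (2 * m + 1) := by
    rw [← pow_succ']
  linear_combination hd + 2 * (m : ℤ) * hps - (2 * (m : ℤ) + 1) * hps2

/-- `n^2` divides `(2m+2)! ∑_{h<n} h^{2m+1}`. -/
theorem stmt17 (m n : ℕ) (hm : 1 ≤ m) (hn : 1 ≤ n) :
    n ^ 2 ∣ (2 * m + 2).factorial * ∑ h ∈ Finset.range n, h ^ (2 * m + 1) := by

  suffices h : ((n ^ 2 : ℕ) : ℤ) ∣ (((2 * m + 2).factorial * ∑ h ∈ Finset.range n, h ^ (2 * m + 1) : ℕ) : ℤ) from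
    Int.ofNat_dvd.mp h
  push_cast
  obtain ⟨c, hc⟩ := key2 m n hm
  obtain ⟨e, he⟩ := dvd_fact_pow_sum (2 * m) n
  have hfac : ((2 * m + 2).factorial : ℤ) = ((m : ℤ) + 1) * 2 * ((2 * m + 1).factorial : ℤ) := by
    rw [show 2 * m + 2 = (2 * m + 1) + 1 from by omega, Nat.factorial_succ]
    push_cast; ring
  refine ⟨((m : ℤ) + 1) * (2 * (m : ℤ) + 1) * e + ((m : ℤ) + 1) * ((2 * m + 1).factorial : ℤ) * c, ?_⟩
  rw [hfac]
  linear_combination ((m : ℤ) + 1) * ((2 * m + 1).factorial : ℤ) * hc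
    + ((m : ℤ) + 1) * (2 * (m : ℤ) + 1) * (n : ℤ) * he
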